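/- In lazy Gumbel sampling using a c-approximate top-k set S with the adjusted threshold B = M - m - c (where M = max_{j in S}(x_j + G_j) and m = min_{j in S} x_j), any index j not in S with G_j < B cannot be the argmax of x_i + G_i over all i in [n]. Consequently the algorithm samples exactly from the softmax distribution p_i proportional to exp(x_i). -/

import Mathlib

open MeasureTheory ProbabilityTheory Real Finset

section GumbelAux

open Filter Topology

/-- The (generalized) Gumbel measure with rate `b`. -/
noncomputable def gumbelM (b : ℝ) : Measure ℝ :=
  MeasureTheory.volume.withDensity fun t =>
    ENNReal.ofReal (Real.exp (-t) * Real.exp (-(b * Real.exp (-t))))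

lemma gumbel_exp_bound {b : ℝ} (hb : 0 < b) (t : ℝ) :
    Real.exp (-t) * Real.exp (-(b * Real.exp (-t))) ≤ 4 / b ^ 2 * Real.exp t := by
  set u := Real.exp (-t) with hu
  have hupos : 0 < u := Real.exp_pos _
  have hE : 0 < Real.exp (b * u) := Real.exp_pos _
  have h1 : b * u / 2 ≤ Real.exp (b * u / 2) := by
    have := Real.add_one_le_exp (b * u / 2); linarith
  have h2 : (b * u) ^ 2 ≤ 4 * Real.exp (b * u) := by
    have hsq := mul_self_le_mul_self (by positivity : (0:ℝ) ≤ b * u / 2) h1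
    have hmul : Real.exp (b * u / 2) * Real.exp (b * u / 2) = Real.exp (b * u) := by
      rw [← Real.exp_add]; ring_nf
    nlinarith
  have het : Real.exp t = u⁻¹ := by rw [hu, Real.exp_neg, inv_inv]
  rw [Real.exp_neg, het, ← div_eq_mul_inv,
    show 4 / b ^ 2 * u⁻¹ = 4 / (b ^ 2 * u) by field_simp,
    div_le_div_iff₀ hE (by positivity)]
  nlinarith

lemma gumbel_cont (b : ℝ) :
    Continuous fun t => Real.exp (-t) * Real.exp (-(b * Real.exp (-t))) := by
  fun_prop

lemma gumbel_integrableOn (b : ℝ) (hb : 0 < b) (a : ℝ) :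
    IntegrableOn (fun t => Real.exp (-t) * Real.exp (-(b * Real.exp (-t))))
      (Set.Iic a) MeasureTheory.volume := by
  apply Integrable.mono' ((integrableOn_exp_Iic a).const_mul (4 / b ^ 2))
  · exact ((gumbel_cont b).aestronglyMeasurable).restrict
  · refine Filter.Eventually.of_forall fun t => ?_
    rw [Real.norm_eq_abs, abs_of_nonneg (by positivity)]
    exact gumbel_exp_bound hb t

lemma gumbel_hasDerivAt (b : ℝ) (hb : 0 < b) (t : ℝ) :
    HasDerivAt (fun t => b⁻¹ * Real.exp (-(b * Real.exp (-t))))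
      (Real.exp (-t) * Real.exp (-(b * Real.exp (-t)))) t := by
  have h1 : HasDerivAt (fun t : ℝ => -(b * Real.exp (-t))) (b * Real.exp (-t)) t := by
    have h := (((Real.hasDerivAt_exp (-t)).comp t (hasDerivAt_neg t)).const_mul b).neg
    exact h.congr_deriv (by ring)
  have h2 := (h1.exp).const_mul b⁻¹
  exact h2.congr_deriv (by rw [mul_left_comm, inv_mul_cancel_left₀ hb.ne', mul_comm])

lemma gumbel_tendsto_atBot (b : ℝ) (hb : 0 < b) :
    Tendsto (fun t => b⁻¹ * Real.exp (-(b * Real.exp (-t)))) atBot (𝓝 0) := by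
  have h1 : Tendsto (fun t : ℝ => Real.exp (-t)) atBot atTop :=
    Real.tendsto_exp_atTop.comp tendsto_neg_atBot_atTop
  have h2 : Tendsto (fun t : ℝ => -(b * Real.exp (-t))) atBot atBot :=
    tendsto_neg_atTop_atBot.comp (h1.const_mul_atTop hb)
  have h3 : Tendsto (fun t : ℝ => Real.exp (-(b * Real.exp (-t)))) atBot (𝓝 0) :=
    Real.tendsto_exp_atBot.comp h2
  simpa using h3.const_mul b⁻¹

lemma gumbel_integral_Iic (b : ℝ) (hb : 0 < b) (a : ℝ) :
    ∫ t in Set.Iic a, Real.exp (-t) * Real.exp (-(b * Real.exp (-t))) =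
      b⁻¹ * Real.exp (-(b * Real.exp (-a))) := by
  have := MeasureTheory.integral_Iic_of_hasDerivAt_of_tendsto'
    (f := fun t => b⁻¹ * Real.exp (-(b * Real.exp (-t))))
    (f' := fun t => Real.exp (-t) * Real.exp (-(b * Real.exp (-t))))
    (fun t _ => gumbel_hasDerivAt b hb t) (gumbel_integrableOn b hb a)
    (gumbel_tendsto_atBot b hb)
  simpa using this

lemma gumbelM_Iic (b : ℝ) (hb : 0 < b) (a : ℝ) :
    gumbelM b (Set.Iic a) = ENNReal.ofReal (b⁻¹ * Real.exp (-(b * Real.exp (-a)))) := by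
  rw [gumbelM, withDensity_apply _ measurableSet_Iic,
    ← MeasureTheory.ofReal_integral_eq_lintegral_ofReal (gumbel_integrableOn b hb a)
      (Filter.Eventually.of_forall fun t => by positivity),
    gumbel_integral_Iic b hb a]

lemma gumbelM_univ (b : ℝ) (hb : 0 < b) :
    gumbelM b Set.univ = ENNReal.ofReal b⁻¹ := by
  have h1 : Tendsto (fun a : ℝ => -(b * Real.exp (-a))) atTop (𝓝 0) := by
    have : Tendsto (fun a : ℝ => Real.exp (-a)) atTop (𝓝 0) :=
      Real.tendsto_exp_atBot.comp tendsto_neg_atTop_atBot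
    have := (this.const_mul b).neg
    simpa using this
  have h2 : Tendsto (fun a : ℝ => b⁻¹ * Real.exp (-(b * Real.exp (-a)))) atTop (𝓝 b⁻¹) := by
    have := ((Real.continuous_exp.tendsto 0).comp h1).const_mul b⁻¹
    simpa using this
  have h3 : Tendsto (fun a : ℝ => gumbelM b (Set.Iic a)) atTop (𝓝 (ENNReal.ofReal b⁻¹)) := by
    simp_rw [gumbelM_Iic b hb]
    exact (ENNReal.continuous_ofReal.tendsto _).comp h2
  exact tendsto_nhds_unique (MeasureTheory.tendsto_measure_Iic_atTop _) h3

lemma gumbelM_singleton (b : ℝ) (a : ℝ) : gumbelM b {a} = 0 :=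
  (withDensity_absolutelyContinuous _ _) (measure_singleton a)

lemma gumbelM_Iio (b : ℝ) (hb : 0 < b) (a : ℝ) :
    gumbelM b (Set.Iio a) = ENNReal.ofReal (b⁻¹ * Real.exp (-(b * Real.exp (-a)))) := by
  rw [← gumbelM_Iic b hb a]
  apply le_antisymm (measure_mono Set.Iio_subset_Iic_self)
  calc gumbelM b (Set.Iic a) = gumbelM b (Set.Iio a ∪ {a}) := by rw [Set.Iio_union_right]
    _ ≤ gumbelM b (Set.Iio a) + gumbelM b {a} := measure_union_le _ _
    _ = gumbelM b (Set.Iio a) := by rw [gumbelM_singleton, add_zero]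

lemma isProbabilityMeasure_gumbelM : IsProbabilityMeasure (gumbelM 1) := by
  constructor
  rw [gumbelM_univ 1 one_pos]
  simp

/-- Auxiliary: `sup'` over the attached finset. -/
lemma sup'_attach_aux {ι : Type*} (s : Finset ι) (hs : s.Nonempty) (f : ι → ℝ) :
    s.attach.sup' (Finset.attach_nonempty_iff.mpr hs) (fun j => f j.1) = s.sup' hs f := by
  apply le_antisymm
  · exact Finset.sup'_le _ _ fun j _ => Finset.le_sup' f j.2
  · exact Finset.sup'_le _ _ fun j hj => Finset.le_sup' (fun j : {y // y ∈ s} => f j.1)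
      (Finset.mem_attach s ⟨j, hj⟩)

end GumbelAux

/-- Lazy Gumbel sampling with a `c`-approximate top-`k` set `S` and the adjusted
threshold `B = max_{j∈S}(x j + G j) - min_{j∈S} x j - c`: any index `j ∉ S` whose noise
is below `B` cannot attain the argmax of `x i + G i`, and consequently the algorithm
samples exactly from the softmax distribution `p i ∝ exp (x i)`. -/
theorem lazy_gumbel_adjusted_threshold_exact {Ω : Type*} [MeasurableSpace Ω]
    (μ : Measure Ω) [IsProbabilityMeasure μ] {n : ℕ} (x : Fin n → ℝ)
    (G : Fin n → Ω → ℝ) (hmeas : ∀ i, Measurable (G i))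
    (hindep : iIndepFun G μ)
    (hcdf : ∀ i t, μ {ω | G i ω ≤ t} = ENNReal.ofReal (Real.exp (-Real.exp (-t))))
    (k : ℕ) (c : ℝ) (hc : 0 ≤ c) (S : Finset (Fin n)) (hS : S.Nonempty)
    (hScard : S.card = k)
    (happrox : ∀ i ∉ S, ∀ j ∈ S, x i - x j ≤ c)
    (B : Ω → ℝ)
    (hB : ∀ ω, B ω = S.sup' hS (fun j => x j + G j ω) - S.inf' hS x - c)
    (eligible : Fin n → Ω → Prop)
    (helig : ∀ j ω, eligible j ω ↔ (j ∈ S ∨ B ω < G j ω)) :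
    (∀ ω, ∀ j ∉ S, G j ω < B ω → ∃ i ∈ S, x j + G j ω < x i + G i ω) ∧
    ∀ i : Fin n,
      μ {ω | eligible i ω ∧
          ∀ j, eligible j ω → j ≠ i → x j + G j ω < x i + G i ω} =
        ENNReal.ofReal (Real.exp (x i) / ∑ j, Real.exp (x j)) := by
  -- the law of each noise is the Gumbel measure
  have hmap : ∀ i, μ.map (G i) = gumbelM 1 := by
    intro i
    haveI : IsProbabilityMeasure (μ.map (G i)) :=
      Measure.isProbabilityMeasure_map (hmeas i).aemeasurable
    haveI := isProbabilityMeasure_gumbelM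
    refine MeasureTheory.Measure.ext_of_Iic (μ.map (G i)) (gumbelM 1) fun a => ?_
    rw [Measure.map_apply (hmeas i) measurableSet_Iic, gumbelM_Iic 1 one_pos a]
    have : G i ⁻¹' Set.Iic a = {ω | G i ω ≤ a} := rfl
    rw [this, hcdf i a]
    norm_num
  -- pairwise "equal up to a constant" events are null
  have hnullpair : ∀ j s : Fin n, j ≠ s → ∀ r : ℝ, μ {ω | G j ω = G s ω + r} = 0 := by
    intro j s hjs r
    have hpair : IndepFun (G j) (G s) μ := hindep.indepFun hjs
    rw [indepFun_iff_map_prod_eq_prod_map_map (hmeas j).aemeasurable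
      (hmeas s).aemeasurable] at hpair
    have hU : MeasurableSet {p : ℝ × ℝ | p.1 = p.2 + r} :=
      measurableSet_eq_fun measurable_fst (measurable_snd.add_const r)
    have : {ω | G j ω = G s ω + r} =
        (fun ω => (G j ω, G s ω)) ⁻¹' {p : ℝ × ℝ | p.1 = p.2 + r} := rfl
    rw [this, ← Measure.map_apply ((hmeas j).prodMk (hmeas s)) hU, hpair]
    haveI : IsProbabilityMeasure (μ.map (G s)) :=
      Measure.isProbabilityMeasure_map (hmeas s).aemeasurable
    rw [Measure.prod_apply hU]
    have hfib : ∀ u : ℝ, (Prod.mk u ⁻¹' {p : ℝ × ℝ | p.1 = p.2 + r}) = {u - r} := by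
      intro u; ext v
      simp only [Set.mem_preimage, Set.mem_setOf_eq, Set.mem_singleton_iff]
      constructor <;> intro h <;> linarith
    simp only [hfib, hmap s, gumbelM_singleton]
    simp
  have part1 : ∀ ω, ∀ j ∉ S, G j ω < B ω → ∃ i ∈ S, x j + G j ω < x i + G i ω := by
    intro ω j hj hlt
    obtain ⟨s', hs'S, hsup⟩ := Finset.exists_mem_eq_sup' hS (fun j => x j + G j ω)
    obtain ⟨s0, hs0S, hinf⟩ := Finset.exists_mem_eq_inf' hS x
    refine ⟨s', hs'S, ?_⟩
    have hxj : x j - x s0 ≤ c := happrox j hj s0 hs0S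
    rw [hB ω, hsup, hinf] at hlt
    linarith
  refine ⟨part1, fun i => ?_⟩
  classical
  -- the "strict global argmax" event
  set A : Set Ω := {ω | ∀ j, j ≠ i → x j + G j ω < x i + G i ω} with hAdef
  set E : Set Ω := {ω | eligible i ω ∧
      ∀ j, eligible j ω → j ≠ i → x j + G j ω < x i + G i ω} with hEdef
  have hsub : A ⊆ E := by
    intro ω hω
    refine ⟨?_, fun j _ hji => hω j hji⟩
    rw [helig]
    by_cases hi : i ∈ S
    · exact Or.inl hi
    · right
      obtain ⟨s', hs'S, hsup⟩ := Finset.exists_mem_eq_sup' hS (fun j => x j + G j ω)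
      obtain ⟨s0, hs0S, hinf⟩ := Finset.exists_mem_eq_inf' hS x
      have h1 : x i - x s0 ≤ c := happrox i hi s0 hs0S
      have h2 : x s' + G s' ω < x i + G i ω := hω s' (fun h => hi (h ▸ hs'S))
      rw [hB ω, hsup, hinf]
      linarith
  -- E \ A is contained in a null set
  set bad : Set Ω := ⋃ (p : Fin n × Fin n × Fin n) (_ : p.1 ≠ p.2.1),
      {ω | G p.1 ω = G p.2.1 ω + (x p.2.1 - x p.2.2 - c)} with hbaddef
  have hbadnull : μ bad = 0 := by
    refine measure_iUnion_null fun p => measure_iUnion_null fun hp => ?_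
    exact hnullpair p.1 p.2.1 hp _
  have hdiff : E \ A ⊆ bad := by
    rintro ω ⟨hE, hA⟩
    rw [hAdef, Set.mem_setOf_eq] at hA
    push_neg at hA
    obtain ⟨j, hji, hge⟩ := hA
    have hjelig : ¬ eligible j ω := by
      intro h
      exact absurd (hE.2 j h hji) (not_lt.mpr hge)
    rw [helig] at hjelig
    push_neg at hjelig
    obtain ⟨hjS, hjB⟩ := hjelig
    have hjB' : G j ω ≤ B ω := not_lt.mp (by exact fun h => (not_lt.mpr hjB) h)
    rcases lt_or_eq_of_le hjB' with hlt | heq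
    · exfalso
      obtain ⟨s, hsS, hlt2⟩ := part1 ω j hjS hlt
      have hselig : eligible s ω := (helig s ω).mpr (Or.inl hsS)
      by_cases hsi : s = i
      · subst hsi; linarith
      · have := hE.2 s hselig hsi
        linarith
    · obtain ⟨s', hs'S, hsup⟩ := Finset.exists_mem_eq_sup' hS (fun j => x j + G j ω)
      obtain ⟨s0, hs0S, hinf⟩ := Finset.exists_mem_eq_inf' hS x
      rw [hB ω, hsup, hinf] at heq
      rw [hbaddef]
      refine Set.mem_iUnion.mpr ⟨⟨j, s', s0⟩, Set.mem_iUnion.mpr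
        ⟨fun h => hjS (by rw [show j = s' from h]; exact hs'S), ?_⟩⟩
      simp only [Set.mem_setOf_eq]
      linarith
  have hEA : μ E = μ A := by
    apply measure_congr
    rw [MeasureTheory.ae_eq_set]
    constructor
    · exact measure_mono_null hdiff hbadnull
    · rw [Set.diff_eq_empty.mpr hsub]; exact measure_empty
  rw [hEA]
  -- now compute μ A
  by_cases hT : (Finset.univ.erase i).Nonempty
  swap
  · -- degenerate case: `i` is the only index
    have huniq : ∀ j : Fin n, j = i := by
      intro j
      by_contra h
      exact hT ⟨j, Finset.mem_erase.mpr ⟨h, Finset.mem_univ j⟩⟩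
    have hA1 : A = Set.univ := by
      ext ω
      simp only [hAdef, Set.mem_setOf_eq, Set.mem_univ, iff_true]
      intro j hji
      exact absurd (huniq j) hji
    have hsum : ∑ j, Real.exp (x j) = Real.exp (x i) := by
      have : (Finset.univ : Finset (Fin n)) = {i} := by
        ext j; simp [huniq j]
      rw [this, Finset.sum_singleton]
    rw [hA1, hsum, measure_univ, div_self (Real.exp_ne_zero _)]
    simp
  -- main case
  set T := Finset.univ.erase i with hTdef
  set R := ∑ j ∈ T, Real.exp (x j) with hRdef
  have hRpos : 0 < R := Finset.sum_pos (fun j _ => Real.exp_pos _) hT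
  set N : Ω → ℝ := fun ω => T.sup' hT (fun j => x j + G j ω) with hNdef
  have hNmeas : Measurable N := by
    have h := Finset.measurable_sup' hT
      (f := fun j (ω : Ω) => x j + G j ω)
      (fun j _ => measurable_const.add (hmeas j))
    have : N = T.sup' hT (fun j (ω : Ω) => x j + G j ω) := by
      funext ω
      simp only [hNdef, Finset.sup'_apply]
    rw [this]; exact h
  -- independence of `G i` and `N`
  have hInd : IndepFun (G i) N μ := by
    have hdisj : Disjoint ({i} : Finset (Fin n)) T := by
      simp [hTdef, Finset.disjoint_left]
    have h0 := hindep.indepFun_finset {i} T hdisj hmeas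
    have hTa : T.attach.Nonempty := Finset.attach_nonempty_iff.mpr hT
    set φ : ((j : {y // y ∈ ({i} : Finset (Fin n))}) → ℝ) → ℝ :=
      fun v => v ⟨i, Finset.mem_singleton_self i⟩ with hφdef
    set ψ : ((j : {y // y ∈ T}) → ℝ) → ℝ :=
      fun v => T.attach.sup' hTa (fun j => x j.1 + v j) with hψdef
    have hφm : Measurable φ := measurable_pi_apply _
    have hψm : Measurable ψ := by
      have h := Finset.measurable_sup' hTa
        (f := fun (j : {y // y ∈ T}) (v : (j : {y // y ∈ T}) → ℝ) => x j.1 + v j)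
        (fun j _ => measurable_const.add (measurable_pi_apply j))
      have : ψ = T.attach.sup'
          hTa (fun (j : {y // y ∈ T}) (v : (j : {y // y ∈ T}) → ℝ) => x j.1 + v j) := by
        funext v
        simp only [hψdef, Finset.sup'_apply]
      rw [this]; exact h
    have := h0.comp hφm hψm
    have heq1 : (φ ∘ fun ω (j : {y // y ∈ ({i} : Finset (Fin n))}) => G j ω) = G i := rfl
    have heq2 : (ψ ∘ fun ω (j : {y // y ∈ T}) => G j ω) = N := by
      funext ω
      show T.attach.sup' hTa (fun j => x j.1 + G j.1 ω) = N ω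
      rw [hNdef]
      exact sup'_attach_aux T hT (fun j => x j + G j ω)
    rwa [heq1, heq2] at this
  haveI : IsProbabilityMeasure (μ.map N) := Measure.isProbabilityMeasure_map hNmeas.aemeasurable
  haveI : IsProbabilityMeasure (μ.map (G i)) :=
    Measure.isProbabilityMeasure_map (hmeas i).aemeasurable
  have hjoint : μ.map (fun ω => (G i ω, N ω)) = (μ.map (G i)).prod (μ.map N) :=
    (indepFun_iff_map_prod_eq_prod_map_map (hmeas i).aemeasurable
      hNmeas.aemeasurable).mp hInd
  set U : Set (ℝ × ℝ) := {p | p.2 < x i + p.1} with hUdef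
  have hU : MeasurableSet U :=
    measurableSet_lt measurable_snd (measurable_const.add measurable_fst)
  have hAU : A = (fun ω => (G i ω, N ω)) ⁻¹' U := by
    ext ω
    simp only [hAdef, Set.mem_setOf_eq, Set.mem_preimage, hUdef, hNdef,
      Finset.sup'_lt_iff]
    constructor
    · intro h j hj
      exact h j (Finset.mem_erase.mp hj).1
    · intro h j hji
      exact h j (Finset.mem_erase.mpr ⟨hji, Finset.mem_univ j⟩)
  -- the CDF of N
  have hmapN : ∀ u : ℝ, μ.map N (Set.Iio u) =
      ENNReal.ofReal (Real.exp (-(Real.exp (-u) * R))) := by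
    intro u
    rw [Measure.map_apply hNmeas measurableSet_Iio]
    have hpre : N ⁻¹' Set.Iio u = ⋂ j ∈ T, G j ⁻¹' Set.Iio (u - x j) := by
      ext ω
      simp only [Set.mem_preimage, Set.mem_Iio, hNdef, Finset.sup'_lt_iff,
        Set.mem_iInter]
      constructor
      · intro h j hj
        have h2 := h j hj
        linarith
      · intro h j hj
        have h2 := h j hj
        linarith
    rw [hpre, hindep.meas_biInter (fun j _ => ⟨Set.Iio (u - x j), measurableSet_Iio, rfl⟩)]
    have hfac : ∀ j ∈ T, μ (G j ⁻¹' Set.Iio (u - x j)) =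
        ENNReal.ofReal (Real.exp (-(Real.exp (-(u - x j))))) := by
      intro j _
      rw [← Measure.map_apply (hmeas j) measurableSet_Iio, hmap j,
        gumbelM_Iio 1 one_pos]
      norm_num
    rw [Finset.prod_congr rfl hfac,
      ← ENNReal.ofReal_prod_of_nonneg (fun j _ => (Real.exp_pos _).le)]
    congr 1
    rw [← Real.exp_sum]
    congr 1
    rw [hRdef, Finset.mul_sum, ← Finset.sum_neg_distrib]
    apply Finset.sum_congr rfl
    intro j _
    rw [neg_inj, ← Real.exp_add]
    ring_nf
  -- the main computation
  set b : ℝ := 1 + Real.exp (-(x i)) * R with hbdef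
  have hbpos : 0 < b := by positivity
  have hmain : μ A = ENNReal.ofReal b⁻¹ := by
    rw [hAU, ← Measure.map_apply ((hmeas i).prodMk hNmeas) hU, hjoint,
      Measure.prod_apply hU]
    have hfib : ∀ t : ℝ, (Prod.mk t ⁻¹' U) = Set.Iio (x i + t) := fun t => rfl
    simp_rw [hfib, hmapN]
    rw [hmap i, gumbelM, lintegral_withDensity_eq_lintegral_mul _
      (by fun_prop) (by fun_prop)]
    have hptw : (fun t => ENNReal.ofReal (Real.exp (-t) * Real.exp (-(1 * Real.exp (-t)))) *
        ENNReal.ofReal (Real.exp (-(Real.exp (-(x i + t)) * R)))) =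
        fun t => ENNReal.ofReal (Real.exp (-t) * Real.exp (-(b * Real.exp (-t)))) := by
      funext t
      rw [← ENNReal.ofReal_mul (by positivity)]
      congr 1
      rw [mul_assoc]
      congr 1
      rw [← Real.exp_add]
      congr 1
      rw [show -(x i + t) = -(x i) + -t by ring, Real.exp_add, hbdef]
      ring
    simp only [Pi.mul_apply]
    have hgb : gumbelM b Set.univ =
        ∫⁻ t, ENNReal.ofReal (Real.exp (-t) * Real.exp (-(b * Real.exp (-t)))) := by
      rw [gumbelM, ← setLIntegral_univ, withDensity_apply _ MeasurableSet.univ]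
    rw [lintegral_congr fun t => by simpa using congrFun hptw t, ← hgb,
      gumbelM_univ b hbpos]
  rw [hmain]
  congr 1
  have hsum : ∑ j, Real.exp (x j) = R + Real.exp (x i) := by
    rw [hRdef, hTdef]
    exact (Finset.sum_erase_add _ _ (Finset.mem_univ i)).symm
  rw [hsum, hbdef, Real.exp_neg]
  have hexpi : 0 < Real.exp (x i) := Real.exp_pos _
  have h1 : (1 + (Real.exp (x i))⁻¹ * R) = (Real.exp (x i) + R) / Real.exp (x i) := by
    field_simp
  rw [h1, inv_div, add_comm R (Real.exp (x i))]
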